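/- For every integer n ≥ 0, the set of level data L such that B_L = 2n and such that L is empty, or the largest level of L is < 1, or the largest level of L is > 2 (i.e. L is a locally minimal level datum at infinity), is finite. -/

import Mathlib

open Finset

/-- The ramification order of a level datum: the least common denominator of its
elements, i.e. the lcm of the denominators (`ram ∅ = 1`). -/
def ram (L : Finset ℚ) : ℕ := L.lcm Rat.den

/-- The least common denominator `d` of the "initial segment" of `L` consisting of the
elements `≥ k` (the elements come in decreasing order `k₀ > k₁ > ⋯`). -/
def segLcm (L : Finset ℚ) (k : ℚ) : ℕ := (L.filter (fun x => k ≤ x)).lcm Rat.den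

/-- A level datum: a finite set of positive rationals such that the least common
denominators `d₀, d₁, …` of the initial segments (for the decreasing order) are all `≥ 2`
and form a strictly increasing sequence.  (Since the `d_j` are increasing, requiring
`d_j ≥ 2` for all `j` is equivalent to `d₀ ≥ 2`, i.e. to the largest element not being
an integer.) -/
def IsLevelDatum (L : Finset ℚ) : Prop :=
  (∀ k ∈ L, 0 < k) ∧
  (∀ k ∈ L, 2 ≤ segLcm L k) ∧
  (∀ k ∈ L, ∀ k' ∈ L, k' < k → segLcm L k < segLcm L k')

/-- The largest level of `L` (junk value `0` for `L = ∅`). -/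
def maxLevel (L : Finset ℚ) : ℚ := WithBot.unbotD 0 L.max

/-- The numerator `s(k) := k · Ram(L) ∈ ℤ` of a level `k` of `L`. -/
def numer (L : Finset ℚ) (k : ℚ) : ℤ := (k * (ram L : ℚ)).num

/-- `σ := k₀ · Ram(L) ∈ ℤ`, the numerator of the largest level. -/
def sigma0 (L : Finset ℚ) : ℤ := numer L (maxLevel L)

/-- `gcd(s(x) for x ∈ s, Ram L)` : the gcd of `Ram L` together with the numerators of the
elements of a subset `s ⊆ L`. -/
def gSeg (L : Finset ℚ) (s : Finset ℚ) : ℕ :=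
  Nat.gcd (ram L) (s.gcd (fun x => (numer L x).natAbs))

/-- The quantity
`B_L = (r − (s₀,r))·s₀ + Σᵢ ((s₀,…,s_{i−1},r) − (s₀,…,s_i,r))·s_i − r² + 1`
(`B_∅ = 0`), equal to the dimension of the elementary wild character variety. -/
def B (L : Finset ℚ) : ℤ :=
  (∑ k ∈ L, ((gSeg L (L.filter (fun x => k < x)) : ℤ)
      - (gSeg L (L.filter (fun x => k ≤ x)) : ℤ)) * numer L k)
    - (ram L : ℤ) ^ 2 + 1

/-- A level datum is locally minimal at infinity if it is empty, or its largest level is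
`< 1` or `> 2`. -/
def LocallyMinimal (L : Finset ℚ) : Prop :=
  L = ∅ ∨ maxLevel L < 1 ∨ 2 < maxLevel L

/-- Rescaling of a level datum by a factor `c`, removing the integer elements. -/
def rescale (L : Finset ℚ) (c : ℚ) : Finset ℚ :=
  (L.image (fun k => c * k)).filter (fun x => x.den ≠ 1)

/-- The local simplification map `S_∞` on level data: if the largest level `k₀` satisfies
`1 < k₀ < 2`, rescale all the levels by `ρ/(σ−ρ)` (where `ρ = Ram L`, `σ = k₀·ρ`) and
remove the integer levels; otherwise do nothing. -/
def Sinf (L : Finset ℚ) : Finset ℚ :=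
  if 1 < maxLevel L ∧ maxLevel L < 2 then
    rescale L ((ram L : ℚ) / ((sigma0 L : ℚ) - (ram L : ℚ)))
  else L

lemma ram_pos (L : Finset ℚ) : 0 < ram L := by
  rw [ram, Nat.pos_iff_ne_zero]
  intro h
  rw [Finset.lcm_eq_zero_iff] at h
  obtain ⟨q, _, hq⟩ := h
  exact q.den_nz hq

lemma numer_cast {L : Finset ℚ} {k : ℚ} (hk : k ∈ L) :
    ((numer L k : ℚ)) = k * (ram L : ℚ) := by
  obtain ⟨c, hc⟩ : k.den ∣ ram L := Finset.dvd_lcm hk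
  have h1 : k * (ram L : ℚ) = ((k.num * c : ℤ) : ℚ) := by
    rw [hc]
    push_cast
    rw [← mul_assoc, Rat.mul_den_eq_num]
  rw [numer, h1, Rat.num_intCast]

lemma gSeg_pos (L : Finset ℚ) (s : Finset ℚ) : 0 < gSeg L s :=
  Nat.gcd_pos_of_pos_left _ (ram_pos L)

lemma gSeg_le {L : Finset ℚ} {s t : Finset ℚ} (hst : s ⊆ t) : gSeg L t ≤ gSeg L s := by
  refine Nat.le_of_dvd (gSeg_pos L s) ?_
  exact Nat.dvd_gcd (Nat.gcd_dvd_left _ _)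
    ((Nat.gcd_dvd_right _ _).trans (Finset.gcd_mono hst))

lemma gSeg_dvd_ram (L s : Finset ℚ) : gSeg L s ∣ ram L := Nat.gcd_dvd_left _ _

lemma telescope (r : ℕ) (f : ℚ → ℕ) (L : Finset ℚ) :
    (∑ k ∈ L, ((Nat.gcd r ((L.filter (fun x => k < x)).gcd f) : ℤ)
      - (Nat.gcd r ((L.filter (fun x => k ≤ x)).gcd f) : ℤ)))
    = (r : ℤ) - Nat.gcd r (L.gcd f) := by
  induction L using Finset.induction_on_min with
  | empty => simp
  | insert a s ha ih =>
    have hna : a ∉ s := fun h => lt_irrefl a (ha a h)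
    rw [Finset.sum_insert hna]
    have h1 : (insert a s).filter (fun x => a < x) = s := by
      rw [Finset.filter_insert, if_neg (lt_irrefl a)]
      exact Finset.filter_true_of_mem (fun x hx => ha x hx)
    have h2 : (insert a s).filter (fun x => a ≤ x) = insert a s :=
      Finset.filter_true_of_mem (fun x hx => by
        rcases Finset.mem_insert.1 hx with rfl | hx
        · exact le_refl _
        · exact (ha x hx).le)
    have h3 : ∀ k ∈ s, ((insert a s).filter (fun x => k < x) = s.filter (fun x => k < x))
        ∧ ((insert a s).filter (fun x => k ≤ x) = s.filter (fun x => k ≤ x)) := by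
      intro k hk
      constructor
      · rw [Finset.filter_insert, if_neg (not_lt.2 (ha k hk).le)]
      · rw [Finset.filter_insert, if_neg (not_le.2 (ha k hk))]
    rw [h1, h2, Finset.sum_congr rfl (fun k hk => by rw [(h3 k hk).1, (h3 k hk).2]), ih]
    ring

lemma finite_T (A : ℤ) (R : ℕ) : {q : ℚ | 0 < q ∧ q.num ≤ A ∧ q.den ≤ R}.Finite := by
  apply Set.Finite.of_finite_image (f := fun q => (q.num, q.den))
  · apply Set.Finite.subset ((Set.finite_Icc (1:ℤ) A).prod (Set.finite_Icc 1 R))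
    rintro ⟨a, b⟩ ⟨q, ⟨hq0, hA, hR⟩, heq⟩
    obtain ⟨rfl, rfl⟩ := Prod.mk.injEq .. ▸ heq
    exact ⟨⟨Rat.num_pos.2 hq0, hA⟩, q.pos, hR⟩
  · intro a _ b _ h
    exact Rat.ext (congrArg Prod.fst h) (congrArg Prod.snd h)

lemma finite_finsets {T : Set ℚ} (h : T.Finite) : {L : Finset ℚ | ↑L ⊆ T}.Finite := by
  refine Set.Finite.of_finite_image (f := fun L : Finset ℚ => (↑L : Set ℚ)) ?_
    (Set.injOn_of_injective Finset.coe_injective)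
  exact h.finite_subsets.subset (by rintro s ⟨L, hL, rfl⟩; exact hL)

/-- for every `n ≥ 0`, the set of locally minimal level data at infinity
with `B_L = 2n` is finite. -/
theorem stmt_1 (n : ℕ) :
    {L : Finset ℚ | IsLevelDatum L ∧ LocallyMinimal L ∧ B L = 2 * (n : ℤ)}.Finite := by
  set R : ℕ := 4 * n + 2 with hRdef
  set A : ℤ := (2 * (n:ℤ) + (R:ℤ)^2) * (R:ℤ) with hAdef
  clear_value A R
  apply Set.Finite.subset (finite_finsets (finite_T A R))
  rintro L ⟨⟨hpos, hseg2, _⟩, hmin, hB⟩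
  intro q hq
  simp only [Finset.mem_coe] at hq
  have hne : L.Nonempty := ⟨q, hq⟩
  have hk₀L : L.max' hne ∈ L := L.max'_mem hne
  set k₀ : ℚ := L.max' hne with hk₀def
  have hmaxeq : maxLevel L = k₀ := by
    rw [maxLevel, ← Finset.coe_max' hne]; rfl
  have hqle : q ≤ k₀ := Finset.le_max' L q hq
  have hr : 0 < ram L := ram_pos L
  have hrQ : (0:ℚ) < (ram L : ℚ) := by exact_mod_cast hr
  have hscast : ((numer L k₀ : ℤ) : ℚ) = k₀ * (ram L : ℚ) := numer_cast hk₀L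
  have hk₀pos : 0 < k₀ := hpos k₀ hk₀L
  have hfilter : L.filter (fun x => k₀ ≤ x) = {k₀} := by
    ext x
    simp only [Finset.mem_filter, Finset.mem_singleton]
    constructor
    · rintro ⟨hx, hk⟩
      exact le_antisymm (Finset.le_max' L x hx) hk
    · rintro rfl; exact ⟨hk₀L, le_refl _⟩
  have hden2 : 2 ≤ k₀.den := by
    have h := hseg2 k₀ hk₀L
    rwa [segLcm, hfilter, Finset.lcm_singleton, normalize_eq] at h
  have hdenr : k₀.den ∣ ram L := Finset.dvd_lcm hk₀L
  have hr2 : 2 ≤ ram L := le_trans hden2 (Nat.le_of_dvd hr hdenr)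
  -- g₀
  have hg₀dvd : gSeg L {k₀} ∣ ram L := gSeg_dvd_ram L _
  have hg₀lt : gSeg L {k₀} < ram L := by
    rcases lt_or_eq_of_le (Nat.le_of_dvd hr hg₀dvd) with h | h
    · exact h
    · exfalso
      have hrd : ((ram L : ℤ)) ∣ numer L k₀ := by
        refine Int.dvd_natAbs.mp (Int.natCast_dvd_natCast.mpr ?_)
        have h2 : gSeg L {k₀} = Nat.gcd (ram L) (numer L k₀).natAbs := by
          rw [gSeg, Finset.gcd_singleton, normalize_eq]
        rw [h2] at h
        exact h ▸ Nat.gcd_dvd_right _ _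
      obtain ⟨m, hm⟩ := hrd
      have hk₀m : k₀ = (m : ℚ) := by
        have h3 : k₀ * (ram L : ℚ) = (m:ℚ) * (ram L : ℚ) := by
          rw [← hscast, hm]; push_cast; ring
        exact mul_right_cancel₀ (ne_of_gt hrQ) h3
      have : k₀.den = 1 := by rw [hk₀m, Rat.den_intCast]
      omega
  -- coefficients are nonnegative
  have hcoeff : ∀ k ∈ L, (0:ℤ) ≤ (gSeg L (L.filter (fun x => k < x)) : ℤ)
      - (gSeg L (L.filter (fun x => k ≤ x)) : ℤ) := by
    intro k hk
    have h := gSeg_le (L := L) (Finset.monotone_filter_right L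
      (fun x _ (hx : k < x) => le_of_lt hx))
    exact sub_nonneg.2 (by exact_mod_cast h)
  have hnum_pos : ∀ k ∈ L, 0 < numer L k := by
    intro k hk
    have : (0:ℚ) < ((numer L k : ℤ) : ℚ) := by
      rw [numer_cast hk]; exact mul_pos (hpos k hk) hrQ
    exact_mod_cast this
  have hnum_le : ∀ k ∈ L, numer L k ≤ numer L k₀ := by
    intro k hk
    have : ((numer L k : ℤ) : ℚ) ≤ ((numer L k₀ : ℤ) : ℚ) := by
      rw [numer_cast hk, hscast]
      exact mul_le_mul_of_nonneg_right (Finset.le_max' L k hk) hrQ.le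
    exact_mod_cast this
  have hs₀pos : 0 < numer L k₀ := hnum_pos k₀ hk₀L
  have htel : (∑ k ∈ L, ((gSeg L (L.filter (fun x => k < x)) : ℤ)
      - (gSeg L (L.filter (fun x => k ≤ x)) : ℤ)))
      = (ram L : ℤ) - (gSeg L L : ℤ) := by
    simpa only [gSeg] using telescope (ram L) (fun x => (numer L x).natAbs) L
  simp only [LocallyMinimal, hmaxeq] at hmin
  rcases hmin with hLe | hlt1 | hgt2
  · exact absurd (hLe ▸ hq) (Finset.notMem_empty q)
  · -- k₀ < 1 : contradiction
    exfalso
    have hs₀lt : numer L k₀ < (ram L : ℤ) := by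
      have : ((numer L k₀ : ℤ):ℚ) < ((ram L : ℤ):ℚ) := by
        push_cast
        rw [hscast]
        nlinarith
      exact_mod_cast this
    have hsum : (∑ k ∈ L, ((gSeg L (L.filter (fun x => k < x)) : ℤ)
        - (gSeg L (L.filter (fun x => k ≤ x)) : ℤ)) * numer L k)
        ≤ ((ram L : ℤ) - (gSeg L L : ℤ)) * numer L k₀ := by
      rw [← htel, Finset.sum_mul]
      exact Finset.sum_le_sum (fun k hk =>
        mul_le_mul_of_nonneg_left (hnum_le k hk) (hcoeff k hk))
    have hG1 : 1 ≤ (gSeg L L : ℤ) := by exact_mod_cast gSeg_pos L L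
    have hBle : 2 * (n:ℤ) ≤ ((ram L : ℤ) - (gSeg L L : ℤ)) * numer L k₀
        - (ram L : ℤ)^2 + 1 := by
      rw [← hB, B]; linarith [hsum]
    have hr2' : (2:ℤ) ≤ (ram L : ℤ) := by exact_mod_cast hr2
    have hn0 : (0:ℤ) ≤ (n:ℤ) := Int.natCast_nonneg n
    have hprod : ((ram L : ℤ) - (gSeg L L : ℤ)) * numer L k₀
        ≤ ((ram L : ℤ) - 1) * ((ram L : ℤ) - 1) := by
      apply mul_le_mul (by linarith) (by linarith) (by linarith) (by linarith)
    nlinarith [hBle, hprod, hr2', hn0]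
  · -- 2 < k₀
    have hempty : L.filter (fun x => k₀ < x) = ∅ := by
      rw [Finset.filter_eq_empty_iff]
      intro x hx
      exact not_lt.2 (Finset.le_max' L x hx)
    have hgSegempty : gSeg L (∅ : Finset ℚ) = ram L := by simp [gSeg]
    have hsum_ge : ((ram L : ℤ) - (gSeg L {k₀} : ℤ)) * numer L k₀
        ≤ ∑ k ∈ L, ((gSeg L (L.filter (fun x => k < x)) : ℤ)
          - (gSeg L (L.filter (fun x => k ≤ x)) : ℤ)) * numer L k := by
      have h := Finset.single_le_sum
        (f := fun k => ((gSeg L (L.filter (fun x => k < x)) : ℤ)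
          - (gSeg L (L.filter (fun x => k ≤ x)) : ℤ)) * numer L k)
        (fun k hk => mul_nonneg (hcoeff k hk) (hnum_pos k hk).le) hk₀L
      rwa [hempty, hfilter, hgSegempty] at h
    have hkey : ((ram L : ℤ) - (gSeg L {k₀} : ℤ)) * numer L k₀
        ≤ 2*(n:ℤ) + (ram L : ℤ)^2 - 1 := by
      rw [← hB, B]; linarith [hsum_ge]
    have hs₀ge : 2*(ram L : ℤ) + 1 ≤ numer L k₀ := by
      have h : 2*((ram L :ℤ):ℚ) < ((numer L k₀ : ℤ):ℚ) := by
        push_cast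
        rw [hscast]
        nlinarith
      have h2 : 2*(ram L : ℤ) < numer L k₀ := by exact_mod_cast h
      linarith
    have h2g₀ : 2*(gSeg L {k₀} : ℤ) ≤ (ram L : ℤ) := by
      obtain ⟨t, ht⟩ := hg₀dvd
      have ht2 : 2 ≤ t := by
        by_contra hcon
        push_neg at hcon
        interval_cases t
        · omega
        · omega
      have h4 : gSeg L {k₀} * 2 ≤ gSeg L {k₀} * t := Nat.mul_le_mul_left _ ht2
      have : 2 * gSeg L {k₀} ≤ ram L := by rw [ht]; linarith [h4]
      exact_mod_cast this
    have hr2' : (2:ℤ) ≤ (ram L : ℤ) := by exact_mod_cast hr2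
    have hg₀lt' : (gSeg L {k₀} : ℤ) < (ram L : ℤ) := by exact_mod_cast hg₀lt
    have hprod : (ram L : ℤ)*(2*(ram L : ℤ)+1)
        ≤ (2*((ram L : ℤ) - (gSeg L {k₀} : ℤ))) * numer L k₀ := by
      apply mul_le_mul (by linarith) hs₀ge (by linarith) (by linarith)
    have hrR : (ram L : ℤ) ≤ 4*(n:ℤ) - 2 := by nlinarith [hkey, hprod]
    have h6 : 1 * numer L k₀ ≤ ((ram L : ℤ) - (gSeg L {k₀} : ℤ)) * numer L k₀ :=
      mul_le_mul_of_nonneg_right (by linarith) hs₀pos.le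
    have hs₀le : numer L k₀ ≤ 2*(n:ℤ) + (ram L : ℤ)^2 - 1 := by
      rw [one_mul] at h6; linarith
    have hrRn : ram L ≤ R := by
      have : (ram L : ℤ) ≤ (R:ℤ) := by rw [hRdef]; push_cast; linarith
      exact_mod_cast this
    have hdenqR : q.den ≤ R := le_trans (Nat.le_of_dvd hr (Finset.dvd_lcm hq)) hrRn
    refine ⟨hpos q hq, ?_, hdenqR⟩
    -- q.num ≤ A
    have hrRz : (ram L : ℤ) ≤ (R : ℤ) := by exact_mod_cast hrRn
    have hsq2 : (ram L : ℤ)^2 ≤ (R:ℤ)^2 := pow_le_pow_left₀ (by linarith) hrRz 2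
    have hs₀A : numer L k₀ ≤ 2*(n:ℤ) + (R:ℤ)^2 := by linarith
    have hk₀s₀ : k₀ ≤ ((numer L k₀ : ℤ) : ℚ) := by
      rw [hscast]
      have h8 : (1:ℚ) ≤ (ram L : ℚ) := by exact_mod_cast hr
      calc k₀ = k₀ * 1 := (mul_one k₀).symm
        _ ≤ k₀ * (ram L : ℚ) := mul_le_mul_of_nonneg_left h8 hk₀pos.le
    have hqnum : (q.num : ℚ) ≤ ((A : ℤ) : ℚ) := by
      have h1 : (q.num : ℚ) = q * q.den := (Rat.mul_den_eq_num q).symm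
      have hdenQ : (q.den : ℚ) ≤ (R : ℚ) := by exact_mod_cast hdenqR
      have hdenQ0 : (0:ℚ) < (q.den : ℚ) := by exact_mod_cast q.pos
      have hs₀AQ : ((numer L k₀ : ℤ) : ℚ) ≤ 2*(n:ℚ) + (R:ℚ)^2 := by
        exact_mod_cast hs₀A
      have hqk : q ≤ ((numer L k₀ : ℤ) : ℚ) := le_trans hqle hk₀s₀
      have hs₀Q0 : (0:ℚ) ≤ ((numer L k₀ : ℤ) : ℚ) := by exact_mod_cast hs₀pos.le
      calc (q.num : ℚ) = q * q.den := h1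
        _ ≤ ((numer L k₀ : ℤ) : ℚ) * q.den := mul_le_mul_of_nonneg_right hqk hdenQ0.le
        _ ≤ ((numer L k₀ : ℤ) : ℚ) * R := mul_le_mul_of_nonneg_left hdenQ hs₀Q0
        _ ≤ (2*(n:ℚ) + (R:ℚ)^2) * R := mul_le_mul_of_nonneg_right hs₀AQ (by positivity)
        _ = ((A : ℤ) : ℚ) := by rw [hAdef]; push_cast; ring
    exact_mod_cast hqnum
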